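/- For x > 0, the function g(x) = 1/log(1+x) satisfies 2·g'(x) - x·g''(x) < 0. -/

import Mathlib

open Real

private lemma hd1 (y : ℝ) (hy : 0 < y) :
    HasDerivAt (fun z : ℝ => 1 / Real.log (1 + z))
      (-(1 / (1 + y)) / (Real.log (1 + y)) ^ 2) y := by
  have h1 : (0:ℝ) < 1 + y := by linarith
  have hlog : Real.log (1 + y) ≠ 0 := (Real.log_pos (by linarith)).ne'
  have hadd : HasDerivAt (fun z : ℝ => 1 + z) 1 y := by
    simpa using (hasDerivAt_id y).const_add 1
  have hl : HasDerivAt (fun z : ℝ => Real.log (1 + z)) (1 / (1 + y)) y :=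
    hadd.log h1.ne'
  have := hl.inv hlog
  simpa [one_div, Pi.inv_def] using this

private lemma hd2 (y : ℝ) (hy : 0 < y) :
    HasDerivAt (fun z : ℝ => -(1 / (1 + z)) / (Real.log (1 + z)) ^ 2)
      ((1 / (1 + y) ^ 2 * (Real.log (1 + y)) ^ 2 -
        -(1 / (1 + y)) * (2 * Real.log (1 + y) ^ 1 * (1 / (1 + y)))) /
        ((Real.log (1 + y)) ^ 2) ^ 2) y := by
  have h1 : (0:ℝ) < 1 + y := by linarith
  have hlog : Real.log (1 + y) ≠ 0 := (Real.log_pos (by linarith)).ne'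
  have hadd : HasDerivAt (fun z : ℝ => 1 + z) 1 y := by
    simpa using (hasDerivAt_id y).const_add 1
  have hl : HasDerivAt (fun z : ℝ => Real.log (1 + z)) (1 / (1 + y)) y :=
    hadd.log h1.ne'
  have hf : HasDerivAt (fun z : ℝ => -(1 / (1 + z))) (1 / (1 + y) ^ 2) y := by
    have := (hadd.inv h1.ne').neg
    simpa [one_div, neg_div, Pi.neg_def, Pi.inv_def] using this
  have hg : HasDerivAt (fun z : ℝ => (Real.log (1 + z)) ^ 2)
      (2 * Real.log (1 + y) ^ 1 * (1 / (1 + y))) y := by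
    simpa [Pi.pow_def] using hl.pow 2
  exact hf.div hg (pow_ne_zero 2 hlog)

theorem q2_neg (x : ℝ) (hx : 0 < x) :
    2 * deriv (fun z : ℝ => 1 / Real.log (1 + z)) x -
      x * iteratedDeriv 2 (fun z : ℝ => 1 / Real.log (1 + z)) x < 0 := by
  have h1 : (0:ℝ) < 1 + x := by linarith
  have hL : 0 < Real.log (1 + x) := Real.log_pos (by linarith)
  have hd1x := (hd1 x hx).deriv
  have hEq : deriv (fun z : ℝ => 1 / Real.log (1 + z)) =ᶠ[nhds x]
      fun z : ℝ => -(1 / (1 + z)) / (Real.log (1 + z)) ^ 2 := by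
    filter_upwards [isOpen_Ioi.mem_nhds (show x ∈ Set.Ioi (0:ℝ) from hx)] with y hy
    exact (hd1 y hy).deriv
  have h2 : iteratedDeriv 2 (fun z : ℝ => 1 / Real.log (1 + z)) x =
      ((1 / (1 + x) ^ 2 * (Real.log (1 + x)) ^ 2 -
        -(1 / (1 + x)) * (2 * Real.log (1 + x) ^ 1 * (1 / (1 + x)))) /
        ((Real.log (1 + x)) ^ 2) ^ 2) := by
    rw [show (2:ℕ) = 1 + 1 from rfl, iteratedDeriv_succ, iteratedDeriv_one]
    rw [hEq.deriv_eq]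
    exact (hd2 x hx).deriv
  rw [hd1x, h2]
  set L := Real.log (1 + x) with hLdef
  have key : 2 * (-(1 / (1 + x)) / L ^ 2) -
      x * ((1 / (1 + x) ^ 2 * L ^ 2 - -(1 / (1 + x)) * (2 * L ^ 1 * (1 / (1 + x)))) /
        (L ^ 2) ^ 2) =
      -((2 * (1 + x) * L + x * (L + 2)) / ((1 + x) ^ 2 * L ^ 3)) := by
    field_simp
    ring
  rw [key]
  have hnum : 0 < 2 * (1 + x) * L + x * (L + 2) := by positivity
  have hden : 0 < (1 + x) ^ 2 * L ^ 3 := by positivity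
  have := div_pos hnum hden
  linarith
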